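/- arXiv:1508.01436 — 4 statements merged into one kernel-verified Lean document; each statement's English description precedes it below -/
import Mathlib

section
/- Let (Ω, μ) be a finite measure space, ν ∈ ℝ, ε > 0 and c₊, c₋ ∈ ℝ, and let f: ℝ → ℝ be a Lipschitz function satisfying f(x) ≥ (ν + ε)x − c₊ and f(x) ≥ (ν − ε)x − c₋ for all x ∈ ℝ. Let ψ ∈ L²(Ω) satisfy ψ ≥ 0 almost everywhere and ∫_Ω ψ² dμ = 1, and let w: ℝ → L²(Ω) be any family of functions with ∫_Ω w(t) ψ dμ = 0 for every t ∈ ℝ. Then the height function h(t) = ν t − ∫_Ω f(w(t) + t ψ) ψ dμ tends to −∞ as |t| → ∞ (i.e. h(t) → −∞ both as t → +∞ and as t → −∞). -/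
open Filter Topology MeasureTheory

lemma l2_mul_integrable {Ω : Type*} [MeasurableSpace Ω] {μ : Measure Ω} {f g : Ω → ℝ}
    (hf : MemLp f 2 μ) (hg : MemLp g 2 μ) : Integrable (fun x => f x * g x) μ := by
  have h := hf.smul (r := 1) hg
  rw [← memLp_one_iff_integrable]
  convert h using 1; funext x; simp [smul_eq_mul, mul_comm]

lemma key_bound {Ω : Type*} [MeasurableSpace Ω] (μ : Measure Ω) [IsFiniteMeasure μ]
    (a c : ℝ) (f : ℝ → ℝ) (K : NNReal) (hf : LipschitzWith K f)
    (hfa : ∀ x, a * x - c ≤ f x)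
    (ψ : Ω → ℝ) (hψ : MemLp ψ 2 μ) (hψ0 : 0 ≤ᵐ[μ] ψ)
    (hψ1 : ∫ x, ψ x ^ 2 ∂μ = 1)
    (u : Ω → ℝ) (hu : MemLp u 2 μ) (huorth : ∫ x, u x * ψ x ∂μ = 0)
    (t : ℝ) :
    a * t - c * ∫ x, ψ x ∂μ ≤ ∫ x, f (u x + t * ψ x) * ψ x ∂μ := by
  have hψint : Integrable ψ μ := hψ.integrable (by norm_num)
  have hv : MemLp (fun x => u x + t * ψ x) 2 μ := hu.add (hψ.const_mul t)
  have hfv : MemLp (fun x => f (u x + t * ψ x)) 2 μ := by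
    have hg : LipschitzWith K (fun x => f x - f 0) := fun x y => by
      simpa [edist_sub_right] using hf x y
    have h1 : MemLp ((fun x => f x - f 0) ∘ (fun x => u x + t * ψ x)) 2 μ :=
      hg.comp_memLp (by simp) hv
    have h2 : MemLp (fun _ : Ω => f 0) 2 μ := memLp_const _
    have heq : (fun x => f (u x + t * ψ x))
        = ((fun x => f x - f 0) ∘ (fun x => u x + t * ψ x)) + fun _ => f 0 := by
      funext x; simp [Function.comp]
    rw [heq]; exact h1.add h2
  have hlhs : Integrable (fun x => (a * (u x + t * ψ x) - c) * ψ x) μ := by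
    have : MemLp (fun x => a * (u x + t * ψ x) - c) 2 μ :=
      (hv.const_mul a).sub (memLp_const c)
    exact l2_mul_integrable this hψ
  have hrhs : Integrable (fun x => f (u x + t * ψ x) * ψ x) μ := l2_mul_integrable hfv hψ
  have hmono : ∫ x, (a * (u x + t * ψ x) - c) * ψ x ∂μ
      ≤ ∫ x, f (u x + t * ψ x) * ψ x ∂μ := by
    refine integral_mono_ae hlhs hrhs ?_
    filter_upwards [hψ0] with x hx
    exact mul_le_mul_of_nonneg_right (hfa _) hx
  refine le_trans (le_of_eq ?_) hmono
  have huψ : Integrable (fun x => u x * ψ x) μ := l2_mul_integrable hu hψ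
  have hψsq : Integrable (fun x => ψ x ^ 2) μ := by
    have := l2_mul_integrable hψ hψ
    simpa [pow_two] using this
  have hA : Integrable (fun x => a * (u x * ψ x) + a * t * ψ x ^ 2) μ := by
    exact (huψ.const_mul a).add (hψsq.const_mul (a * t))
  calc a * t - c * ∫ x, ψ x ∂μ
      = a * (∫ x, u x * ψ x ∂μ) + (a * t) * (∫ x, ψ x ^ 2 ∂μ) - c * ∫ x, ψ x ∂μ := by
        rw [huorth, hψ1]; ring
    _ = ∫ x, (a * (u x * ψ x) + a * t * ψ x ^ 2 - c * ψ x) ∂μ := by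
        rw [integral_sub hA (hψint.const_mul c),
          integral_add (huψ.const_mul a) (hψsq.const_mul (a * t)),
          integral_const_mul, integral_const_mul, integral_const_mul]
    _ = ∫ x, (a * (u x + t * ψ x) - c) * ψ x ∂μ :=
        integral_congr_ae (Eventually.of_forall fun x => by ring)

/-- Along each fiber, the height function `h(t) = νt - ∫ f(w(t) + tψ) ψ` tends to `-∞`
as `t → ±∞`, provided `f` is bounded below by the two lines `(ν+ε)x - c₊` and `(ν-ε)x - c₋`. -/
theorem stmt1 {Ω : Type*} [MeasurableSpace Ω] (μ : Measure Ω) [IsFiniteMeasure μ]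
    (ν ε : ℝ) (hε : 0 < ε) (cp cm : ℝ) (f : ℝ → ℝ) (K : NNReal)
    (hf : LipschitzWith K f)
    (hfp : ∀ x, (ν + ε) * x - cp ≤ f x)
    (hfm : ∀ x, (ν - ε) * x - cm ≤ f x)
    (ψ : Ω → ℝ) (hψ : MemLp ψ 2 μ) (hψ0 : 0 ≤ᵐ[μ] ψ)
    (hψ1 : ∫ x, ψ x ^ 2 ∂μ = 1)
    (w : ℝ → Ω → ℝ) (hw : ∀ t, MemLp (w t) 2 μ)
    (hworth : ∀ t, ∫ x, w t x * ψ x ∂μ = 0) :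
    Tendsto (fun t => ν * t - ∫ x, f (w t x + t * ψ x) * ψ x ∂μ) atTop atBot ∧
    Tendsto (fun t => ν * t - ∫ x, f (w t x + t * ψ x) * ψ x ∂μ) atBot atBot := by
  set I : ℝ := ∫ x, ψ x ∂μ with hI
  constructor
  · have hbound : ∀ t, ν * t - ∫ x, f (w t x + t * ψ x) * ψ x ∂μ ≤ -ε * t + cp * I := by
      intro t
      have := key_bound μ (ν + ε) cp f K hf hfp ψ hψ hψ0 hψ1 (w t) (hw t) (hworth t) t
      linarith
    have htend : Tendsto (fun t : ℝ => -ε * t + cp * I) atTop atBot :=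
      Tendsto.atBot_add
        ((tendsto_const_mul_atBot_of_neg (by linarith : -ε < 0)).mpr tendsto_id)
        tendsto_const_nhds
    exact tendsto_atBot_mono hbound htend
  · have hbound : ∀ t, ν * t - ∫ x, f (w t x + t * ψ x) * ψ x ∂μ ≤ ε * t + cm * I := by
      intro t
      have := key_bound μ (ν - ε) cm f K hf hfm ψ hψ hψ0 hψ1 (w t) (hw t) (hworth t) t
      linarith
    have htend : Tendsto (fun t : ℝ => ε * t + cm * I) atBot atBot :=
      Tendsto.atBot_add ((tendsto_const_mul_atBot_of_pos hε).mpr tendsto_id)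
        tendsto_const_nhds
    exact tendsto_atBot_mono hbound htend
end

section
/- Let X and Y be real Banach spaces and j: X → Y an injective continuous linear map. Let T₀: X → Y be a continuous linear operator, λ₀ ∈ ℝ, and φ₀ ∈ X a nonzero vector with (T₀ − λ₀ j) φ₀ = 0. Assume that the kernel of T₀ − λ₀ j is the one-dimensional span of φ₀, that the range of T₀ − λ₀ j is closed, and that Y is the direct sum of this range and the one-dimensional span of j(φ₀) (in particular j(φ₀) does not lie in the range). Let ℓ: X → ℝ be a continuous linear functional with ℓ(φ₀) = 1. Then there exist an open neighborhood U of T₀ in the Banach space B(X, Y) of bounded operators and analytic maps λ: U → ℝ and φ: U → X such that λ(T₀) = λ₀, φ(T₀) = φ₀, and for every T ∈ U one has ℓ(φ(T)) = 1 and T(φ(T)) = λ(T) · j(φ(T)); moreover these are unique in the sense that for every T ∈ U there is a neighborhood of (λ₀, φ₀) in ℝ × X in which (λ(T), φ(T)) is the only pair (s, x) satisfying ℓ(x) = 1 and T x = s · j(x). -/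
open Filter Topology Set

set_option maxHeartbeats 1000000 in
/-- Analytic perturbation of a simple eigenvalue: if `(T₀ - λ₀ j) φ₀ = 0`, the kernel of
`T₀ - λ₀ j` is the span of `φ₀`, its range is closed, and `Y` is the direct sum of this
range and the span of `j φ₀`, then nearby operators `T` have a unique eigenpair
`(λ(T), φ(T))` normalized by `ℓ(φ(T)) = 1`, depending analytically on `T`. -/
theorem stmt2 {X Y : Type*} [NormedAddCommGroup X] [NormedSpace ℝ X] [CompleteSpace X]
    [NormedAddCommGroup Y] [NormedSpace ℝ Y] [CompleteSpace Y]
    (j : X →L[ℝ] Y) (hj : Function.Injective j)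
    (T₀ : X →L[ℝ] Y) (lam₀ : ℝ) (φ₀ : X) (hφ₀ : φ₀ ≠ 0)
    (heig : (T₀ - lam₀ • j) φ₀ = 0)
    (hker : LinearMap.ker ((T₀ - lam₀ • j : X →L[ℝ] Y) : X →ₗ[ℝ] Y) = Submodule.span ℝ {φ₀})
    (hclosed : IsClosed (LinearMap.range ((T₀ - lam₀ • j : X →L[ℝ] Y) : X →ₗ[ℝ] Y) : Set Y))
    (hcompl : IsCompl (LinearMap.range ((T₀ - lam₀ • j : X →L[ℝ] Y) : X →ₗ[ℝ] Y))
      (Submodule.span ℝ {j φ₀}))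
    (ℓ : X →L[ℝ] ℝ) (hℓ : ℓ φ₀ = 1) :
    ∃ (U : Set (X →L[ℝ] Y)) (lam : (X →L[ℝ] Y) → ℝ) (φ : (X →L[ℝ] Y) → X),
      IsOpen U ∧ T₀ ∈ U ∧
      AnalyticOnNhd ℝ lam U ∧ AnalyticOnNhd ℝ φ U ∧
      lam T₀ = lam₀ ∧ φ T₀ = φ₀ ∧
      (∀ T ∈ U, ℓ (φ T) = 1 ∧ T (φ T) = lam T • j (φ T)) ∧
      (∀ T ∈ U, ∃ V ∈ 𝓝 ((lam₀, φ₀) : ℝ × X), (lam T, φ T) ∈ V ∧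
        ∀ p ∈ V, ℓ p.2 = 1 → T p.2 = p.1 • j p.2 → p = (lam T, φ T)) := by
  classical
  set A : X →L[ℝ] Y := T₀ - lam₀ • j with hA
  have hjφ₀ : j φ₀ ≠ 0 := fun h => hφ₀ (hj (by simpa using h))
  set E := ((X →L[ℝ] Y) × (ℝ × X))
  set E' := ((X →L[ℝ] Y) × (ℝ × Y))
  set F : E → E' := fun p => (p.1, (ℓ p.2.2 - 1, p.1 p.2.2 - p.2.1 • j p.2.2)) with hF
  set p₀ : E := (T₀, (lam₀, φ₀)) with hp₀
  -- the candidate derivative at p₀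
  set M : E →L[ℝ] Y :=
    (ContinuousLinearMap.apply ℝ Y φ₀).comp (ContinuousLinearMap.fst ℝ _ _)
    + A.comp ((ContinuousLinearMap.snd ℝ ℝ X).comp (ContinuousLinearMap.snd ℝ _ _))
    - ((ContinuousLinearMap.id ℝ ℝ).smulRight (j φ₀)).comp
        ((ContinuousLinearMap.fst ℝ ℝ X).comp (ContinuousLinearMap.snd ℝ _ _)) with hM
  set D : E →L[ℝ] E' :=
    (ContinuousLinearMap.fst ℝ _ _).prod
      ((ℓ.comp ((ContinuousLinearMap.snd ℝ ℝ X).comp (ContinuousLinearMap.snd ℝ _ _))).prod M)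
    with hD
  have hDapp : ∀ v : E, D v = (v.1, (ℓ v.2.2, v.1 φ₀ + A v.2.2 - v.2.1 • j φ₀)) := by
    intro v; rfl
  have hdisj := hcompl.disjoint
  -- injectivity of D
  have hinj : Function.Injective D := by
    intro v w hvw
    have h0 : D (v - w) = 0 := by rw [map_sub, hvw, sub_self]
    rw [hDapp] at h0
    set u := v - w with hu
    have h1 : u.1 = 0 := congrArg Prod.fst h0
    have h0' := congrArg Prod.snd h0
    have h2 : ℓ u.2.2 = 0 := congrArg Prod.fst h0'
    have h3 : u.1 φ₀ + A u.2.2 - u.2.1 • j φ₀ = 0 := congrArg Prod.snd h0'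
    rw [h1] at h3
    simp only [ContinuousLinearMap.zero_apply, zero_add] at h3
    have h4 : A u.2.2 = u.2.1 • j φ₀ := sub_eq_zero.mp h3
    have h5 : A u.2.2 ∈ LinearMap.range (A : X →ₗ[ℝ] Y) ⊓ Submodule.span ℝ {j φ₀} := by
      refine ⟨LinearMap.mem_range_self _ _, ?_⟩
      rw [h4]; exact Submodule.smul_mem _ _ (Submodule.mem_span_singleton_self _)
    rw [hdisj.eq_bot] at h5
    have h6 : A u.2.2 = 0 := h5
    have h7 : u.2.1 • j φ₀ = 0 := by rw [← h4]; exact h6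
    have h8 : u.2.1 = 0 := by
      rcases smul_eq_zero.mp h7 with h | h
      · exact h
      · exact absurd h hjφ₀
    have h9 : u.2.2 ∈ LinearMap.ker (A : X →ₗ[ℝ] Y) := h6
    rw [hker, Submodule.mem_span_singleton] at h9
    obtain ⟨c, hc⟩ := h9
    have h10 : ℓ u.2.2 = c := by rw [← hc]; simp [hℓ]
    have h11 : u.2.2 = 0 := by rw [← hc, ← h10, h2, zero_smul]
    have hu0 : u = 0 := by
      have : u = (u.1, (u.2.1, u.2.2)) := rfl
      rw [this, h1, h8, h11]; rfl
    exact sub_eq_zero.mp (hu ▸ hu0)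
  -- surjectivity of D
  have hsurj : Function.Surjective D := by
    rintro ⟨B, a, y⟩
    have hy : y - B φ₀ ∈ LinearMap.range (A : X →ₗ[ℝ] Y) ⊔ Submodule.span ℝ {j φ₀} := by
      rw [hcompl.sup_eq_top]; trivial
    obtain ⟨r, hr, m, hm, hrm⟩ := Submodule.mem_sup.mp hy
    obtain ⟨x₁, hx₁⟩ := hr
    obtain ⟨c, hc⟩ := Submodule.mem_span_singleton.mp hm
    refine ⟨(B, (-c, x₁ + (a - ℓ x₁) • φ₀)), ?_⟩
    rw [hDapp]
    have hAx : A (x₁ + (a - ℓ x₁) • φ₀) = r := by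
      rw [map_add, map_smul, heig, smul_zero, add_zero]; exact hx₁
    have hℓx : ℓ (x₁ + (a - ℓ x₁) • φ₀) = a := by simp [hℓ]
    refine Prod.ext rfl (Prod.ext ?_ ?_)
    · simpa using hℓx
    · show B φ₀ + A (x₁ + (a - ℓ x₁) • φ₀) - (-c) • j φ₀ = y
      rw [hAx, neg_smul, sub_neg_eq_add, add_assoc, hc, hrm]
      abel
  set Deq : E ≃L[ℝ] E' := ContinuousLinearEquiv.ofBijective D
    (LinearMap.ker_eq_bot.mpr hinj) (LinearMap.range_eq_top.mpr hsurj) with hDeq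
  have hDeqcoe : (Deq : E →L[ℝ] E') = D := ContinuousLinearEquiv.coe_ofBijective _ _ _
  -- analyticity of F
  have hFan : ∀ p : E, AnalyticAt ℝ F p := by
    intro p
    apply analyticAt_fst.prod
    apply AnalyticAt.prod
    · exact ((ℓ.comp ((ContinuousLinearMap.snd ℝ ℝ X).comp
        (ContinuousLinearMap.snd ℝ _ _))).analyticAt p).sub analyticAt_const
    · have hin1 : AnalyticAt ℝ (fun p : E => (p.1, p.2.2)) p :=
        analyticAt_fst.prod (AnalyticAt.comp (f := fun p : E => p.2) (x := p)
          analyticAt_snd analyticAt_snd)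
      have hb1 : AnalyticAt ℝ
          ((fun q : (X →L[ℝ] Y) × X => q.1 q.2) ∘ (fun p : E => (p.1, p.2.2))) p :=
        AnalyticAt.comp (f := fun p : E => (p.1, p.2.2)) (x := p)
          ((ContinuousLinearMap.id ℝ (X →L[ℝ] Y)).analyticAt_bilinear (p.1, p.2.2)) hin1
      have hin2 : AnalyticAt ℝ (fun p : E => (p.2.1, j p.2.2)) p :=
        (AnalyticAt.comp (f := fun p : E => p.2) (x := p) analyticAt_fst analyticAt_snd).prod
          (AnalyticAt.comp (f := fun p : E => p.2.2) (x := p) (j.analyticAt _)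
            (AnalyticAt.comp (f := fun p : E => p.2) (x := p) analyticAt_snd analyticAt_snd))
      have hb2 : AnalyticAt ℝ
          ((fun q : ℝ × Y => q.1 • q.2) ∘ (fun p : E => (p.2.1, j p.2.2))) p :=
        AnalyticAt.comp (f := fun p : E => (p.2.1, j p.2.2)) (x := p)
          ((ContinuousLinearMap.lsmul ℝ ℝ : ℝ →L[ℝ] Y →L[ℝ] Y).analyticAt_bilinear
            (p.2.1, j p.2.2)) hin2
      exact hb1.sub hb2
  -- F is smooth, so fderiv is continuous
  have hFcd : ContDiff ℝ (⊤ : ℕ∞) F := by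
    apply contDiff_fst.prodMk
    apply ContDiff.prodMk
    · exact (ℓ.contDiff.comp (contDiff_snd.comp contDiff_snd)).sub contDiff_const
    · have hb1 : ContDiff ℝ (⊤ : ℕ∞)
          ((fun q : (X →L[ℝ] Y) × X => q.1 q.2) ∘ (fun p : E => (p.1, p.2.2))) :=
        isBoundedBilinearMap_apply.contDiff.comp
          (contDiff_fst.prodMk (contDiff_snd.comp contDiff_snd))
      have hb2 : ContDiff ℝ (⊤ : ℕ∞)
          ((fun q : ℝ × Y => q.1 • q.2) ∘ (fun p : E => (p.2.1, j p.2.2))) :=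
        isBoundedBilinearMap_smul.contDiff.comp
          ((contDiff_fst.comp contDiff_snd).prodMk
            (j.contDiff.comp (contDiff_snd.comp contDiff_snd)))
      exact hb1.sub hb2
  have hfderivcont : Continuous (fderiv ℝ F) :=
    hFcd.continuous_fderiv (by simp)
  -- strict derivative of F at p₀ is D
  have hDstrict : HasStrictFDerivAt F (Deq : E →L[ℝ] E') p₀ := by
    rw [hDeqcoe]
    have h1 : HasStrictFDerivAt (fun p : E => p.1)
        (ContinuousLinearMap.fst ℝ _ _) p₀ := hasStrictFDerivAt_fst
    have h2 := ((ℓ.comp ((ContinuousLinearMap.snd ℝ ℝ X).comp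
        (ContinuousLinearMap.snd ℝ (X →L[ℝ] Y) (ℝ × X)))).hasStrictFDerivAt
        (x := p₀)).sub_const (1 : ℝ)
    set C1 : E →L[ℝ] ((X →L[ℝ] Y) × X) :=
      (ContinuousLinearMap.fst ℝ _ _).prod
        ((ContinuousLinearMap.snd ℝ ℝ X).comp (ContinuousLinearMap.snd ℝ _ _)) with hC1d
    set C2 : E →L[ℝ] (ℝ × Y) :=
      ((ContinuousLinearMap.fst ℝ ℝ X).comp (ContinuousLinearMap.snd ℝ _ _)).prod
        (j.comp ((ContinuousLinearMap.snd ℝ ℝ X).comp (ContinuousLinearMap.snd ℝ _ _))) with hC2d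
    have h3 : HasStrictFDerivAt (fun p : E => p.1 p.2.2)
        ((isBoundedBilinearMap_apply.deriv (T₀, φ₀)).comp C1) p₀ :=
      (isBoundedBilinearMap_apply.hasStrictFDerivAt (T₀, φ₀)).comp p₀ C1.hasStrictFDerivAt
    have h4 : HasStrictFDerivAt (fun p : E => p.2.1 • j p.2.2)
        ((isBoundedBilinearMap_smul.deriv (lam₀, j φ₀)).comp C2) p₀ :=
      (isBoundedBilinearMap_smul.hasStrictFDerivAt (lam₀, j φ₀)).comp p₀ C2.hasStrictFDerivAt
    have hbig := h1.prodMk (h2.prodMk (h3.sub h4))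
    have heq : (ContinuousLinearMap.fst ℝ _ _).prod
        ((ℓ.comp ((ContinuousLinearMap.snd ℝ ℝ X).comp (ContinuousLinearMap.snd ℝ _ _))).prod
          (((isBoundedBilinearMap_apply.deriv (T₀, φ₀)).comp C1) -
            ((isBoundedBilinearMap_smul.deriv (lam₀, j φ₀)).comp C2))) = D := by
      apply ContinuousLinearMap.ext
      intro v
      rw [hDapp]
      refine Prod.ext rfl (Prod.ext rfl ?_)
      show (isBoundedBilinearMap_apply.deriv (T₀, φ₀)) (C1 v)
          - (isBoundedBilinearMap_smul.deriv (lam₀, j φ₀)) (C2 v)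
          = v.1 φ₀ + A v.2.2 - v.2.1 • j φ₀
      rw [IsBoundedBilinearMap.deriv_apply, IsBoundedBilinearMap.deriv_apply]
      show T₀ v.2.2 + v.1 φ₀ - (lam₀ • j v.2.2 + v.2.1 • j φ₀)
          = v.1 φ₀ + A v.2.2 - v.2.1 • j φ₀
      have : A v.2.2 = T₀ v.2.2 - lam₀ • j v.2.2 := by simp [hA]
      rw [this]; abel
    rw [← heq]
    exact hbig
  -- the local homeomorphism
  set f := hDstrict.toOpenPartialHomeomorph F with hfdef
  have hfcoe : ⇑f = F := hDstrict.toOpenPartialHomeomorph_coe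
  have hsrc : p₀ ∈ f.source := hDstrict.mem_toOpenPartialHomeomorph_source
  set S : Set E := f.source ∩ (fderiv ℝ F) ⁻¹'
    (Set.range ((↑) : (E ≃L[ℝ] E') → E →L[ℝ] E')) with hSdef
  have hSopen : IsOpen S :=
    f.open_source.inter (ContinuousLinearEquiv.isOpen.preimage hfderivcont)
  have hp₀S : p₀ ∈ S := ⟨hsrc, ⟨Deq, (hDstrict.hasFDerivAt.fderiv).symm⟩⟩
  have hSsub : S ⊆ f.source := inter_subset_left
  -- analyticity of the inverse at points of `f '' S`
  have hsymm : ∀ p ∈ S, AnalyticAt ℝ (⇑f.symm) (f p) := by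
    intro p hp
    obtain ⟨e, he⟩ := hp.2
    obtain ⟨q, hq⟩ := hFan p
    have hq' : HasFPowerSeriesAt (⇑f) q p := by rw [hfcoe]; exact hq
    have h1 : q 1 = (continuousMultilinearCurryFin1 ℝ E E').symm e := by
      have h2 : fderiv ℝ F p = continuousMultilinearCurryFin1 ℝ E E' (q 1) := hq.fderiv_eq
      have h3 : continuousMultilinearCurryFin1 ℝ E E' (q 1) = (e : E →L[ℝ] E') := by
        rw [← h2]; exact he.symm
      rw [← h3]; simp
    exact (f.hasFPowerSeriesAt_symm hp.1 hq' h1).analyticAt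
  -- the open set of operators and the eigenpair functions
  have hTφ : T₀ φ₀ - lam₀ • j φ₀ = 0 := by simpa [hA] using heig
  set U₀ : Set (X →L[ℝ] Y) := (fun T => ((T, ((0:ℝ), (0:Y))) : E')) ⁻¹' (f '' S) with hU₀def
  have himgopen : IsOpen (f '' S) := f.isOpen_image_of_subset_source hSopen hSsub
  have hU₀open : IsOpen U₀ := himgopen.preimage (continuous_id.prodMk continuous_const)
  have hfp₀ : f p₀ = (T₀, ((0:ℝ), (0:Y))) := by
    rw [hfcoe]
    show (T₀, (ℓ φ₀ - 1, T₀ φ₀ - lam₀ • j φ₀)) = (T₀, ((0:ℝ), (0:Y)))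
    rw [hℓ, hTφ]; norm_num
  have hT₀U₀ : T₀ ∈ U₀ := ⟨p₀, hp₀S, hfp₀⟩
  set G := ⇑f.symm with hGdef
  set lam : (X →L[ℝ] Y) → ℝ := fun T => (G (T, ((0:ℝ), (0:Y)))).2.1 with hlamdef
  set φf : (X →L[ℝ] Y) → X := fun T => (G (T, ((0:ℝ), (0:Y)))).2.2 with hφfdef
  have hkey : ∀ T ∈ U₀, G (T, ((0:ℝ), (0:Y))) ∈ S ∧
      G (T, ((0:ℝ), (0:Y))) = (T, (lam T, φf T)) ∧
      ((T, ((0:ℝ), (0:Y))) : E') ∈ f.target ∧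
      f (T, (lam T, φf T)) = (T, ((0:ℝ), (0:Y))) := by
    intro T hT
    obtain ⟨p, hpS, hfp⟩ := hT
    replace hfp : f p = ((T, ((0:ℝ), (0:Y))) : E') := hfp
    have hpsrc := hSsub hpS
    have hG : G (T, ((0:ℝ), (0:Y))) = p := by rw [← hfp]; exact f.left_inv hpsrc
    have htar : ((T, ((0:ℝ), (0:Y))) : E') ∈ f.target := by
      rw [← hfp]; exact f.map_source hpsrc
    have hfirst : p.1 = T := by
      have h5 : (F p).1 = T := by rw [← hfcoe, hfp]
      simpa [hF] using h5
    have hGT : G (T, ((0:ℝ), (0:Y))) = (T, (lam T, φf T)) := by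
      refine Prod.ext ?_ rfl
      rw [hG, hfirst]
    refine ⟨hG ▸ hpS, hGT, htar, ?_⟩
    rw [← hGT]
    exact f.right_inv htar
  -- the eigenvalue equations on U₀
  have heigen : ∀ T ∈ U₀, ℓ (φf T) = 1 ∧ T (φf T) = lam T • j (φf T) := by
    intro T hT
    have h4 := (hkey T hT).2.2.2
    rw [hfcoe] at h4
    have h5 : ℓ (φf T) - 1 = 0 := congrArg (fun z : E' => z.2.1) h4
    have h6 : T (φf T) - lam T • j (φf T) = 0 := congrArg (fun z : E' => z.2.2) h4
    exact ⟨by linarith, sub_eq_zero.mp h6⟩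
  -- analyticity of lam and φf on U₀
  have hGan : ∀ T ∈ U₀, AnalyticAt ℝ G ((T, ((0:ℝ), (0:Y))) : E') := by
    intro T hT
    have h := hsymm _ (hkey T hT).1
    rwa [f.right_inv (hkey T hT).2.2.1] at h
  have hGcomp : ∀ T ∈ U₀, AnalyticAt ℝ (fun T => G (T, ((0:ℝ), (0:Y)))) T := by
    intro T hT
    exact AnalyticAt.comp (f := fun T : X →L[ℝ] Y => ((T, ((0:ℝ), (0:Y))) : E')) (x := T)
      (hGan T hT) (analyticAt_id.prod analyticAt_const)
  have hlamAn : ∀ T ∈ U₀, AnalyticAt ℝ lam T := by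
    intro T hT
    have h1 : AnalyticAt ℝ (fun T => (G (T, ((0:ℝ), (0:Y)))).2) T :=
      AnalyticAt.comp (f := fun T => G (T, ((0:ℝ), (0:Y)))) (x := T)
        analyticAt_snd (hGcomp T hT)
    exact AnalyticAt.comp (f := fun T => (G (T, ((0:ℝ), (0:Y)))).2) (x := T)
      analyticAt_fst h1
  have hφAn : ∀ T ∈ U₀, AnalyticAt ℝ φf T := by
    intro T hT
    have h1 : AnalyticAt ℝ (fun T => (G (T, ((0:ℝ), (0:Y)))).2) T :=
      AnalyticAt.comp (f := fun T => G (T, ((0:ℝ), (0:Y)))) (x := T)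
        analyticAt_snd (hGcomp T hT)
    exact AnalyticAt.comp (f := fun T => (G (T, ((0:ℝ), (0:Y)))).2) (x := T)
      analyticAt_snd h1
  -- the values at T₀
  have hGT₀ : G (T₀, ((0:ℝ), (0:Y))) = p₀ := by rw [← hfp₀]; exact f.left_inv hsrc
  have hlam₀ : lam T₀ = lam₀ := by show (G (T₀, ((0:ℝ), (0:Y)))).2.1 = lam₀; rw [hGT₀]
  have hφ₀' : φf T₀ = φ₀ := by show (G (T₀, ((0:ℝ), (0:Y)))).2.2 = φ₀; rw [hGT₀]
  -- choose ε
  obtain ⟨ε, hε, hball⟩ := Metric.isOpen_iff.mp hSopen p₀ hp₀S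
  have hcont : ContinuousOn (fun T => ((lam T, φf T) : ℝ × X)) U₀ := fun T hT =>
    (((hlamAn T hT).continuousAt).prodMk ((hφAn T hT).continuousAt)).continuousWithinAt
  set U : Set (X →L[ℝ] Y) :=
    (U₀ ∩ (fun T => ((lam T, φf T) : ℝ × X)) ⁻¹' Metric.ball ((lam₀, φ₀) : ℝ × X) ε)
      ∩ Metric.ball T₀ ε with hUdef
  have hUopen : IsOpen U :=
    (hcont.isOpen_inter_preimage hU₀open Metric.isOpen_ball).inter Metric.isOpen_ball
  have hUsub : U ⊆ U₀ := fun T hT => hT.1.1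
  have hT₀U : T₀ ∈ U := by
    refine ⟨⟨hT₀U₀, ?_⟩, Metric.mem_ball_self hε⟩
    show ((lam T₀, φf T₀) : ℝ × X) ∈ Metric.ball ((lam₀, φ₀) : ℝ × X) ε
    rw [hlam₀, hφ₀']
    exact Metric.mem_ball_self hε
  refine ⟨U, lam, φf, hUopen, hT₀U, fun T hT => hlamAn T (hUsub hT),
    fun T hT => hφAn T (hUsub hT), hlam₀, hφ₀', fun T hT => heigen T (hUsub hT), ?_⟩
  -- uniqueness
  intro T hT
  refine ⟨Metric.ball ((lam₀, φ₀) : ℝ × X) ε, Metric.ball_mem_nhds _ hε, hT.1.2, ?_⟩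
  rintro ⟨s, x⟩ hpV h1 h2
  have hmem1 : ((T, (s, x)) : E) ∈ f.source := by
    apply hSsub
    apply hball
    rw [Metric.mem_ball]
    have hd : dist ((T, (s, x)) : E) p₀ = max (dist T T₀) (dist ((s, x) : ℝ × X) (lam₀, φ₀)) :=
      Prod.dist_eq
    rw [hd]
    exact max_lt (Metric.mem_ball.mp hT.2) (Metric.mem_ball.mp hpV)
  have hmem2 : ((T, (lam T, φf T)) : E) ∈ f.source := by
    rw [← (hkey T (hUsub hT)).2.1]
    exact hSsub (hkey T (hUsub hT)).1
  have hfeq : f ((T, (s, x)) : E) = f ((T, (lam T, φf T)) : E) := by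
    rw [(hkey T (hUsub hT)).2.2.2]
    rw [hfcoe]
    show ((T, (ℓ x - 1, T x - s • j x)) : E') = (T, ((0:ℝ), (0:Y)))
    rw [h1, h2]; norm_num
  have h3 := f.injOn hmem1 hmem2 hfeq
  exact congrArg Prod.snd h3
end

section
/- Let g: ℝ → ℝ be differentiable and let A = {x ∈ ℝ : g(x) > 0}. If A is nonempty and g'(x) ≠ 0 for every x ∈ A, then A contains a semi-infinite interval: there exists c ∈ ℝ such that either (c, +∞) ⊆ A or (−∞, c) ⊆ A. -/
/-- If `A = {x | g x > 0}` is nonempty and contains no critical point of the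
differentiable function `g`, then `A` contains a semi-infinite interval. -/
theorem stmt5 (g : ℝ → ℝ) (hg : Differentiable ℝ g)
    (hne : {x : ℝ | 0 < g x}.Nonempty)
    (hcrit : ∀ x, 0 < g x → deriv g x ≠ 0) :
    ∃ c : ℝ, Set.Ioi c ⊆ {x : ℝ | 0 < g x} ∨ Set.Iio c ⊆ {x : ℝ | 0 < g x} := by
  obtain ⟨x0, hx0⟩ := hne
  by_contra h
  push_neg at h
  obtain ⟨h1, h2⟩ := h x0
  obtain ⟨b, hb, hgb⟩ := Set.not_subset.1 h1
  obtain ⟨a, ha, hga⟩ := Set.not_subset.1 h2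
  simp only [Set.mem_setOf_eq, not_lt] at hgb hga
  have hab : a ≤ b := le_trans (le_of_lt ha) (le_of_lt hb)
  obtain ⟨m, hm, hmax⟩ := IsCompact.exists_isMaxOn (isCompact_Icc (a := a) (b := b))
    (Set.nonempty_Icc.2 hab) (hg.continuous.continuousOn)
  have hgm : 0 < g m := lt_of_lt_of_le hx0 (hmax ⟨le_of_lt ha, le_of_lt hb⟩)
  have hmo : m ∈ Set.Ioo a b := by
    rcases hm.1.lt_or_eq with h | h
    · rcases hm.2.lt_or_eq with h' | h'
      · exact ⟨h, h'⟩
      · exact absurd hgm (by simp [h', not_lt.2 hgb])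
    · exact absurd hgm (by simp [← h, not_lt.2 hga])
  exact hcrit m hgm (IsLocalMax.deriv_eq_zero
    ((hmax.isLocalMax (Icc_mem_nhds hmo.1 hmo.2))))
end

section
/- Let g: ℝ → ℝ be twice differentiable and suppose that every zero of g' is not a zero of g'' (every critical point of g is nondegenerate). Let x* ∈ ℝ satisfy g'(x*) = 0 and g''(x*) < 0, and suppose there exists y ∈ ℝ with g(y) > g(x*). Then there exists z ∈ ℝ with g'(z) = 0, g''(z) > 0 and g(z) < g(x*). -/
open Set Filter Topology

lemma aux_sides (g : ℝ → ℝ) (hg : Differentiable ℝ g) (hg' : Differentiable ℝ (deriv g))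
    (w : ℝ) (h1 : deriv g w = 0) (h2 : deriv (deriv g) w < 0) :
    (∃ u, w < u ∧ ∀ t ∈ Set.Ioo w u, g t < g w) ∧
    (∃ l, l < w ∧ ∀ t ∈ Set.Ioo l w, g t < g w) := by
  have hd : HasDerivAt (deriv g) (deriv (deriv g) w) w := (hg' w).hasDerivAt
  have hs : Tendsto (slope (deriv g) w) (𝓝[≠] w) (𝓝 (deriv (deriv g) w)) :=
    hasDerivAt_iff_tendsto_slope.mp hd
  have hev : ∀ᶠ t in 𝓝[≠] w, slope (deriv g) w t < 0 := hs.eventually_lt_const h2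
  constructor
  · have hevR : ∀ᶠ t in 𝓝[>] w, slope (deriv g) w t < 0 :=
      hev.filter_mono (nhdsWithin_mono _ (fun t ht => ne_of_gt ht))
    obtain ⟨u, hu, hsub⟩ := (mem_nhdsGT_iff_exists_Ioo_subset).mp hevR
    refine ⟨u, hu, fun t ht => ?_⟩
    have hderiv : ∀ s ∈ Set.Ioo w u, deriv g s < 0 := by
      intro s hs'
      have := hsub hs'
      rw [Set.mem_setOf_eq, slope_def_field, h1, sub_zero] at this
      have hpos : (0:ℝ) < s - w := by linarith [hs'.1]
      rcases div_neg_iff.mp this with ⟨_, hb⟩ | ⟨ha, _⟩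
      · linarith
      · exact ha
    have hanti : StrictAntiOn g (Set.Icc w u) := by
      apply strictAntiOn_of_deriv_neg (convex_Icc w u) hg.continuous.continuousOn
      intro s hs'
      rw [interior_Icc] at hs'
      exact hderiv s hs'
    exact hanti ⟨le_refl w, le_of_lt hu⟩ ⟨le_of_lt ht.1, le_of_lt ht.2⟩ ht.1
  · have hevL : ∀ᶠ t in 𝓝[<] w, slope (deriv g) w t < 0 :=
      hev.filter_mono (nhdsWithin_mono _ (fun t ht => ne_of_lt ht))
    obtain ⟨l, hl, hsub⟩ := (mem_nhdsLT_iff_exists_Ioo_subset).mp hevL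
    refine ⟨l, hl, fun t ht => ?_⟩
    have hderiv : ∀ s ∈ Set.Ioo l w, 0 < deriv g s := by
      intro s hs'
      have := hsub hs'
      rw [Set.mem_setOf_eq, slope_def_field, h1, sub_zero] at this
      have hneg : s - w < 0 := by linarith [hs'.2]
      rcases div_neg_iff.mp this with ⟨ha, _⟩ | ⟨_, hb⟩
      · exact ha
      · linarith
    have hmono : StrictMonoOn g (Set.Icc l w) := by
      apply strictMonoOn_of_deriv_pos (convex_Icc l w) hg.continuous.continuousOn
      intro s hs'
      rw [interior_Icc] at hs'
      exact hderiv s hs'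
    exact hmono ⟨le_of_lt ht.1, le_of_lt ht.2⟩ ⟨le_of_lt hl, le_refl w⟩ ht.2


/-- For a twice differentiable function with only nondegenerate critical points:
if `x₀` is a nondegenerate local maximum (`g'(x₀) = 0`, `g''(x₀) < 0`) and some value of
`g` exceeds `g(x₀)`, then there is a nondegenerate local minimum `z` with `g(z) < g(x₀)`. -/
theorem stmt6 (g : ℝ → ℝ) (hg : Differentiable ℝ g) (hg' : Differentiable ℝ (deriv g))
    (hmorse : ∀ x, deriv g x = 0 → deriv (deriv g) x ≠ 0)
    (x₀ : ℝ) (h1 : deriv g x₀ = 0) (h2 : deriv (deriv g) x₀ < 0)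
    (y : ℝ) (hy : g x₀ < g y) :
    ∃ z, deriv g z = 0 ∧ 0 < deriv (deriv g) z ∧ g z < g x₀ := by
  rcases lt_trichotomy x₀ y with hxy | hxy | hxy
  · -- case x₀ < y
    obtain ⟨⟨u, hu, hdecr⟩, -⟩ := aux_sides g hg hg' x₀ h1 h2
    set t₀ : ℝ := min ((x₀ + u) / 2) ((x₀ + y) / 2) with ht₀
    have ht1 : x₀ < t₀ := by
      apply lt_min <;> linarith
    have ht2 : t₀ < u := by
      calc t₀ ≤ (x₀ + u) / 2 := min_le_left _ _
        _ < u := by linarith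
    have ht3 : t₀ < y := by
      calc t₀ ≤ (x₀ + y) / 2 := min_le_right _ _
        _ < y := by linarith
    have hgt₀ : g t₀ < g x₀ := hdecr t₀ ⟨ht1, ht2⟩
    obtain ⟨z, hzmem, hzmin⟩ := isCompact_Icc.exists_isMinOn (Set.nonempty_Icc.mpr hxy.le)
      hg.continuous.continuousOn
    have hmin : ∀ t ∈ Set.Icc x₀ y, g z ≤ g t := fun t ht => hzmin ht
    have hgz : g z < g x₀ := lt_of_le_of_lt (hmin t₀ ⟨ht1.le, ht3.le⟩) hgt₀
    have hz1 : x₀ < z := by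
      rcases hzmem.1.lt_or_eq with h | h
      · exact h
      · exfalso; rw [← h] at hgz; exact lt_irrefl _ hgz
    have hz2 : z < y := by
      rcases hzmem.2.lt_or_eq with h | h
      · exact h
      · exfalso; rw [h] at hgz; linarith
    have hloc : IsLocalMin g z := hzmin.isLocalMin (Icc_mem_nhds hz1 hz2)
    have hdz : deriv g z = 0 := hloc.deriv_eq_zero
    rcases (hmorse z hdz).lt_or_gt with hneg | hpos
    · exfalso
      obtain ⟨⟨u', hu', hdecr'⟩, -⟩ := aux_sides g hg hg' z hdz hneg
      set t₁ : ℝ := min ((z + u') / 2) ((z + y) / 2) with ht₁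
      have h1' : z < t₁ := by apply lt_min <;> linarith
      have h2' : t₁ < u' := by
        calc t₁ ≤ (z + u') / 2 := min_le_left _ _
          _ < u' := by linarith
      have h3' : t₁ < y := by
        calc t₁ ≤ (z + y) / 2 := min_le_right _ _
          _ < y := by linarith
      have := hdecr' t₁ ⟨h1', h2'⟩
      have := hmin t₁ ⟨by linarith, h3'.le⟩
      linarith
    · exact ⟨z, hdz, hpos, hgz⟩
  · exact absurd hy (by rw [hxy]; exact lt_irrefl _)
  · -- case y < x₀
    obtain ⟨-, ⟨l, hl, hincr⟩⟩ := aux_sides g hg hg' x₀ h1 h2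
    set t₀ : ℝ := max ((x₀ + l) / 2) ((x₀ + y) / 2) with ht₀
    have ht1 : t₀ < x₀ := by
      apply max_lt <;> linarith
    have ht2 : l < t₀ := by
      calc l < (x₀ + l) / 2 := by linarith
        _ ≤ t₀ := le_max_left _ _
    have ht3 : y < t₀ := by
      calc y < (x₀ + y) / 2 := by linarith
        _ ≤ t₀ := le_max_right _ _
    have hgt₀ : g t₀ < g x₀ := hincr t₀ ⟨ht2, ht1⟩
    obtain ⟨z, hzmem, hzmin⟩ := isCompact_Icc.exists_isMinOn (Set.nonempty_Icc.mpr hxy.le)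
      hg.continuous.continuousOn
    have hmin : ∀ t ∈ Set.Icc y x₀, g z ≤ g t := fun t ht => hzmin ht
    have hgz : g z < g x₀ := lt_of_le_of_lt (hmin t₀ ⟨ht3.le, ht1.le⟩) hgt₀
    have hz1 : y < z := by
      rcases hzmem.1.lt_or_eq with h | h
      · exact h
      · exfalso; rw [← h] at hgz; linarith
    have hz2 : z < x₀ := by
      rcases hzmem.2.lt_or_eq with h | h
      · exact h
      · exfalso; rw [h] at hgz; exact lt_irrefl _ hgz
    have hloc : IsLocalMin g z := hzmin.isLocalMin (Icc_mem_nhds hz1 hz2)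
    have hdz : deriv g z = 0 := hloc.deriv_eq_zero
    rcases (hmorse z hdz).lt_or_gt with hneg | hpos
    · exfalso
      obtain ⟨-, ⟨l', hl', hincr'⟩⟩ := aux_sides g hg hg' z hdz hneg
      set t₁ : ℝ := max ((z + l') / 2) ((z + y) / 2) with ht₁
      have h1' : t₁ < z := by apply max_lt <;> linarith
      have h2' : l' < t₁ := by
        calc l' < (z + l') / 2 := by linarith
          _ ≤ t₁ := le_max_left _ _
      have h3' : y < t₁ := by
        calc y < (z + y) / 2 := by linarith
          _ ≤ t₁ := le_max_right _ _
      have := hincr' t₁ ⟨h2', h1'⟩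
      have := hmin t₁ ⟨h3'.le, by linarith⟩
      linarith
    · exact ⟨z, hdz, hpos, hgz⟩
end
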